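/- Let G be a connected simple graph in which every vertex has degree at least 2, G has no even cycles, and G satisfies the odd-cycle condition. Then every vertex of G lies on at least one cycle. -/

import Mathlib

/-- `G` has no even cycles. -/
def SimpleGraph.NoEvenCycles {V : Type*} (G : SimpleGraph V) : Prop :=
  ∀ ⦃v : V⦄ (c : G.Walk v v), c.IsCycle → ¬ Even c.length

/-- The odd-cycle condition: every two cycles either share a vertex or are joined by an
edge of `G`. -/
def SimpleGraph.OddCycleCondition {V : Type*} (G : SimpleGraph V) : Prop :=
  ∀ ⦃u v : V⦄ (c₁ : G.Walk u u) (c₂ : G.Walk v v), c₁.IsCycle → c₂.IsCycle →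
    (∃ x, x ∈ c₁.support ∧ x ∈ c₂.support) ∨
    (∃ x y, x ∈ c₁.support ∧ y ∈ c₂.support ∧ G.Adj x y)

/-- A compact graph: a finite connected simple graph in which every vertex has degree
greater than one, with no even cycles, satisfying the odd-cycle condition. -/
def SimpleGraph.IsCompact {V : Type*} [Fintype V] (G : SimpleGraph V)
    [DecidableRel G.Adj] : Prop :=
  G.Connected ∧ (∀ v : V, 2 ≤ G.degree v) ∧ G.NoEvenCycles ∧ G.OddCycleCondition

namespace StmtAux

open SimpleGraph

variable {V : Type*} {G : SimpleGraph V}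

/-- Appending an edge to the end of a path through a fresh vertex gives a path. -/
lemma concat_isPath {u v w : V} {p : G.Walk u v} (hp : p.IsPath) (h : G.Adj v w)
    (hw : w ∉ p.support) : (p.concat h).IsPath := by
  have h1 : (SimpleGraph.Walk.cons h.symm p.reverse).IsPath := by
    rw [Walk.cons_isPath_iff]
    refine ⟨hp.reverse, by simpa [Walk.support_reverse] using hw⟩
  rw [← Walk.reverse_concat p h] at h1
  have h2 := h1.reverse
  rwa [Walk.reverse_reverse] at h2

/-- In a path, at most one edge is incident to the starting vertex. -/
lemma start_edge_unique {x w y z : V} {p : G.Walk x w} (hp : p.IsPath)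
    (hy : s(x, y) ∈ p.edges) (hz : s(x, z) ∈ p.edges) : y = z := by
  cases p with
  | nil => simp at hy
  | cons hadj q =>
    rename_i b
    rw [Walk.cons_isPath_iff] at hp
    rw [Walk.edges_cons, List.mem_cons] at hy hz
    have key : ∀ t : V, s(x, t) = s(x, b) ∨ s(x, t) ∈ q.edges → t = b := by
      intro t ht
      rcases ht with h1 | h1
      · rw [Sym2.eq_iff] at h1
        rcases h1 with ⟨-, h1⟩ | ⟨h1, h2⟩
        · exact h1
        · exact absurd h1 (G.ne_of_adj hadj)
      · exact absurd (Walk.fst_mem_support_of_mem_edges q h1) hp.2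
    rw [key y hy, key z hz]

/-- If `v` has two distinct neighbours joined by a walk avoiding `v`, then some cycle
passes through `v`. -/
lemma cycle_of_reach {v a b : V} (hva : G.Adj v a) (hvb : G.Adj v b) (hab : a ≠ b)
    (w : G.Walk a b) (hw : v ∉ w.support) :
    ∃ c : G.Walk v v, c.IsCycle := by
  classical
  have hq : w.bypass.IsPath := Walk.bypass_isPath w
  have hvq : v ∉ w.bypass.support := fun h => hw (Walk.support_bypass_subset w h)
  refine ⟨Walk.cons hva (w.bypass.concat hvb.symm), ?_⟩
  rw [Walk.cons_isCycle_iff]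
  constructor
  · exact concat_isPath hq hvb.symm hvq
  · rw [Walk.edges_concat, List.concat_eq_append, List.mem_append, List.mem_singleton]
    rintro (h | h)
    · exact hvq (Walk.fst_mem_support_of_mem_edges _ h)
    · rw [Sym2.eq_iff] at h
      rcases h with ⟨h1, -⟩ | ⟨-, h2⟩
      · exact hvq (h1 ▸ Walk.end_mem_support w.bypass)
      · exact hab h2

/-- Given a neighbour `a` of `v`, assuming no cycle passes through `v`, there is a cycle
all of whose vertices are reachable from `a` by walks avoiding `v`. -/
lemma exists_cycle_avoiding [Fintype V] [DecidableRel G.Adj]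
    (hdeg : ∀ u : V, 2 ≤ G.degree u)
    {v a : V} (hva : G.Adj v a)
    (H : ∀ (u : V) (c : G.Walk u u), c.IsCycle → v ∉ c.support) :
    ∃ (x : V) (c : G.Walk x x), c.IsCycle ∧
      ∀ w ∈ c.support, ∃ t : G.Walk a w, v ∉ t.support := by
  classical
  -- the set of lengths of paths from `a` avoiding `v`
  set S : Set ℕ := {n | ∃ (x : V) (p : G.Walk a x), p.IsPath ∧ v ∉ p.support ∧ p.length = n}
    with hS
  have h0 : (0 : ℕ) ∈ S := by
    refine ⟨a, Walk.nil, Walk.IsPath.nil, ?_, rfl⟩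
    simp [G.ne_of_adj hva]
  have hbdd : BddAbove S := by
    refine ⟨Fintype.card V, ?_⟩
    rintro n ⟨x, p, hp, -, rfl⟩
    exact hp.length_lt.le
  obtain ⟨x, p, hp, hvp, hlen⟩ := Nat.sSup_mem ⟨0, h0⟩ hbdd
  -- maximality: every neighbour of `x` other than `v` lies on `p`
  have hmax : ∀ y, G.Adj x y → y ≠ v → y ∈ p.support := by
    intro y hxy hyv
    by_contra hy
    have hmem : (p.concat hxy).length ∈ S := by
      refine ⟨y, p.concat hxy, concat_isPath hp hxy hy, ?_, rfl⟩
      rw [Walk.support_concat, List.mem_append, List.mem_singleton]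
      rintro (h | h)
      · exact hvp h
      · exact hyv h.symm
    have := le_csSup hbdd hmem
    rw [Walk.length_concat, hlen] at this
    omega
  -- `p` is not trivial
  have hlen1 : 1 ≤ p.length := by
    by_contra hcon
    have h00 : p.length = 0 := by omega
    have hsup : p.support = [a] := by
      have h2 : p.support.length = 1 := by rw [Walk.length_support, h00]
      have h3 : p.support.tail = [] := by
        rw [p.support_eq_cons, List.length_cons] at h2
        have h4 : p.support.tail.length = 0 := by omega
        exact List.length_eq_zero_iff.mp h4
      rw [p.support_eq_cons, h3]
    obtain ⟨y, hy, z, hz, hyz⟩ := Finset.one_lt_card.mp (hdeg x)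
    rw [SimpleGraph.mem_neighborFinset] at hy hz
    have hax : a = x := Walk.eq_of_length_eq_zero h00
    -- one of y, z differs from v
    have : ∃ t, G.Adj x t ∧ t ≠ v := by
      by_cases hyv : y = v
      · exact ⟨z, hz, fun h => hyz (by rw [hyv, h])⟩
      · exact ⟨y, hy, hyv⟩
    obtain ⟨t, hxt, htv⟩ := this
    have := hmax t hxt htv
    rw [hsup, List.mem_singleton] at this
    exact G.ne_of_adj hxt (by rw [this, hax])
  have hax : a ≠ x := by
    intro h
    subst h
    rw [Walk.isPath_iff_eq_nil] at hp
    subst hp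
    simp at hlen1
  -- `x` is not adjacent to `v` (else we'd get a cycle through `v`)
  have hxv : ¬ G.Adj x v := by
    intro hxv
    obtain ⟨c, hc⟩ := cycle_of_reach hva hxv.symm hax p hvp
    exact H v c hc (Walk.start_mem_support c)
  -- two distinct neighbours of `x`, both on `p`
  obtain ⟨y, hy, z, hz, hyz⟩ := Finset.one_lt_card.mp (hdeg x)
  rw [SimpleGraph.mem_neighborFinset] at hy hz
  have hyv : y ≠ v := fun h => hxv (h ▸ hy)
  have hzv : z ≠ v := fun h => hxv (h ▸ hz)
  have hyp : y ∈ p.support := hmax y hy hyv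
  have hzp : z ∈ p.support := hmax z hz hzv
  set r : G.Walk x a := p.reverse with hr
  have hrp : r.IsPath := hp.reverse
  have hyr : y ∈ r.support := by rw [hr, Walk.support_reverse, List.mem_reverse]; exact hyp
  have hzr : z ∈ r.support := by rw [hr, Walk.support_reverse, List.mem_reverse]; exact hzp
  -- choose a neighbour `y'` of `x` on `p` such that the edge `x y'` is not on `p`
  have : ∃ y', G.Adj x y' ∧ y' ∈ r.support ∧ s(x, y') ∉ r.edges := by
    by_cases hyE : s(x, y) ∈ r.edges
    · refine ⟨z, hz, hzr, fun hzE => hyz (start_edge_unique hrp hyE hzE)⟩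
    · exact ⟨y, hy, hyr, hyE⟩
  obtain ⟨y', hxy', hy'r, hy'E⟩ := this
  set q : G.Walk y' x := (r.takeUntil y' hy'r).reverse with hq
  have hqpath : q.IsPath := (hrp.takeUntil hy'r).reverse
  have hqe : s(x, y') ∉ q.edges := by
    rw [hq, Walk.edges_reverse, List.mem_reverse]
    exact fun h => hy'E (Walk.edges_takeUntil_subset r hy'r h)
  refine ⟨x, Walk.cons hxy' q, ?_, ?_⟩
  · rw [Walk.cons_isCycle_iff]
    exact ⟨hqpath, hqe⟩
  · intro w hw
    rw [Walk.support_cons, List.mem_cons] at hw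
    have hwp : w ∈ p.support := by
      rcases hw with rfl | hw
      · exact Walk.end_mem_support p
      · rw [hq, Walk.support_reverse, List.mem_reverse] at hw
        have := Walk.support_takeUntil_subset r hy'r hw
        rw [hr, Walk.support_reverse, List.mem_reverse] at this
        exact this
    refine ⟨p.takeUntil w hwp, fun h => hvp (Walk.support_takeUntil_subset p hwp h)⟩

end StmtAux

/-- Every vertex of a compact graph lies on at least one cycle. -/
theorem stmt2 {V : Type*} [Fintype V] (G : SimpleGraph V) [DecidableRel G.Adj]
    (hG : G.IsCompact) :
    ∀ v : V, ∃ (u : V) (c : G.Walk u u), c.IsCycle ∧ v ∈ c.support := by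
  classical
  obtain ⟨-, hdeg, -, hocc⟩ := hG
  intro v
  by_contra H
  push_neg at H
  -- two distinct neighbours of `v`
  obtain ⟨a, ha, b, hb, hab⟩ := Finset.one_lt_card.mp (hdeg v)
  rw [SimpleGraph.mem_neighborFinset] at ha hb
  -- cycles reachable from `a` and `b` avoiding `v`
  obtain ⟨x₁, c₁, hc₁, hs₁⟩ := StmtAux.exists_cycle_avoiding hdeg ha H
  obtain ⟨x₂, c₂, hc₂, hs₂⟩ := StmtAux.exists_cycle_avoiding hdeg hb H
  -- from the odd-cycle condition, get a walk from `a` to `b` avoiding `v`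
  have hreach : ∃ w : G.Walk a b, v ∉ w.support := by
    rcases hocc c₁ c₂ hc₁ hc₂ with ⟨w, hw₁, hw₂⟩ | ⟨w₁, w₂, hw₁, hw₂, hadj⟩
    · obtain ⟨t₁, ht₁⟩ := hs₁ w hw₁
      obtain ⟨t₂, ht₂⟩ := hs₂ w hw₂
      refine ⟨t₁.append t₂.reverse, ?_⟩
      rw [SimpleGraph.Walk.mem_support_append_iff]
      rintro (h | h)
      · exact ht₁ h
      · rw [SimpleGraph.Walk.support_reverse, List.mem_reverse] at h
        exact ht₂ h
    · obtain ⟨t₁, ht₁⟩ := hs₁ w₁ hw₁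
      obtain ⟨t₂, ht₂⟩ := hs₂ w₂ hw₂
      have hvw₁ : v ≠ w₁ := by
        obtain ⟨t, ht⟩ := hs₁ w₁ hw₁
        exact fun h => ht (h ▸ SimpleGraph.Walk.end_mem_support t)
      refine ⟨t₁.append (t₂.concat hadj.symm).reverse, ?_⟩
      rw [SimpleGraph.Walk.mem_support_append_iff]
      rintro (h | h)
      · exact ht₁ h
      · rw [SimpleGraph.Walk.support_reverse, List.mem_reverse,
          SimpleGraph.Walk.support_concat, List.mem_append,
          List.mem_singleton] at h
        rcases h with h | h
        · exact ht₂ h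
        · exact hvw₁ h
  obtain ⟨w, hw⟩ := hreach
  obtain ⟨c, hc⟩ := StmtAux.cycle_of_reach ha hb hab w hw
  exact H v c hc (SimpleGraph.Walk.start_mem_support c)
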